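/- Let r ≥ 3 and n ≥ 2r. For every proper coloring of the complement of the Kneser graph K(n,r) and every permutation σ of [n] such that the induced map A ↦ σ(A) on r-element subsets maps every color class to itself, one has σ(A) = A for every r-element subset A of [n]. -/

import Mathlib

/-- The complement of the Kneser graph `K(n,r)`: vertices are the `r`-element subsets
of `[n]`, two distinct subsets being adjacent iff they intersect. -/
def KneserCompl (n r : ℕ) : SimpleGraph {s : Finset (Fin n) // s.card = r} where
  Adj a b := a ≠ b ∧ (a.1 ∩ b.1).Nonempty
  symm := by
    constructor
    rintro a b ⟨h1, h2⟩
    refine ⟨h1.symm, ?_⟩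
    rwa [Finset.inter_comm]
  loopless := by
    constructor
    rintro a ⟨h1, _⟩
    exact h1 rfl

/-- The map induced on `r`-element subsets of `[n]` by a permutation `σ` of `[n]`. -/
def inducedSubsetMap (n r : ℕ) (σ : Equiv.Perm (Fin n))
    (A : {s : Finset (Fin n) // s.card = r}) : {s : Finset (Fin n) // s.card = r} :=
  ⟨A.1.image σ, by rw [Finset.card_image_of_injective _ σ.injective]; exact A.2⟩

/-- For `r ≥ 3` and `n ≥ 2r`: given any proper coloring of the complement of the
Kneser graph `K(n,r)` and any permutation `σ` of `[n]` whose induced map on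
`r`-element subsets maps every color class to itself, `σ(A) = A` for every
`r`-element subset `A` of `[n]`. -/
theorem stmt15 (n r : ℕ) (hr : 3 ≤ r) (hn : 2 * r ≤ n)
    (α : Type*) (C : (KneserCompl n r).Coloring α) (σ : Equiv.Perm (Fin n))
    (hfix : ∀ A : {s : Finset (Fin n) // s.card = r}, C (inducedSubsetMap n r σ A) = C A) :
    ∀ A : Finset (Fin n), A.card = r → A.image σ = A := by
  classical
  -- Key fact: every r-set is fixed or moved to a disjoint set.
  have star : ∀ S : Finset (Fin n), ∀ h : S.card = r,
      S.image σ = S ∨ (S.image σ ∩ S) = ∅ := by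
    intro S h
    have hc := hfix ⟨S, h⟩
    by_contra hcon
    push_neg at hcon
    obtain ⟨h1, h2⟩ := hcon
    have hadj : (KneserCompl n r).Adj (inducedSubsetMap n r σ ⟨S, h⟩) ⟨S, h⟩ := by
      constructor
      · intro he
        apply h1
        have := congrArg Subtype.val he
        simpa [inducedSubsetMap] using this
      · simpa [inducedSubsetMap, Finset.nonempty_iff_ne_empty] using h2
    exact C.valid hadj hc
  suffices hσ : σ = 1 by
    intro A hA
    simp [hσ]
  by_contra hne
  obtain ⟨x, hx⟩ : ∃ x, σ x ≠ x := by
    by_contra h; push_neg at h; exact hne (Equiv.ext fun a => h a)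
  set y := σ x with hy
  have hxy : x ≠ y := fun h => hx h.symm
  -- Step 1: every r-set containing x and y is invariant.
  have step1 : ∀ S : Finset (Fin n), S.card = r → x ∈ S → y ∈ S → S.image σ = S := by
    intro S hS hxS hyS
    rcases star S hS with h | h
    · exact h
    · exfalso
      have : y ∈ S.image σ ∩ S :=
        Finset.mem_inter.2 ⟨Finset.mem_image_of_mem σ hxS, hyS⟩
      simp [h] at this
  have hncard : Fintype.card (Fin n) = n := Fintype.card_fin n
  -- Step 2: σ z ∈ {x, y, z} for every z outside {x, y}.
  have step2 : ∀ z : Fin n, z ≠ x → z ≠ y → σ z ∈ ({x, y, z} : Finset (Fin n)) := by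
    intro z hzx hzy
    have hcard3 : ({x, y, z} : Finset (Fin n)).card = 3 := by
      rw [Finset.card_insert_of_notMem, Finset.card_insert_of_notMem,
        Finset.card_singleton]
      · simp [Ne.symm hzy]
      · simp [hxy, Ne.symm hzx]
    obtain ⟨T1, hT1sub, hT1card⟩ :=
      Finset.exists_subset_card_eq (s := ({x, y, z} : Finset (Fin n))ᶜ) (n := r - 3)
        (by rw [Finset.card_compl, hcard3, hncard]; omega)
    obtain ⟨T2, hT2sub, hT2card⟩ :=
      Finset.exists_subset_card_eq (s := (({x, y, z} : Finset (Fin n))ᶜ) \ T1) (n := r - 3)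
        (by rw [Finset.card_sdiff_of_subset hT1sub, Finset.card_compl, hcard3, hncard, hT1card]; omega)
    have hinv : ∀ T : Finset (Fin n), T ⊆ (({x, y, z} : Finset (Fin n))ᶜ) →
        T.card = r - 3 → σ z ∈ ({x, y, z} : Finset (Fin n)) ∪ T := by
      intro T hTsub hTcard
      have hdisj : Disjoint ({x, y, z} : Finset (Fin n)) T := by
        rw [Finset.disjoint_right]
        intro a haT ha
        exact (Finset.mem_compl.1 (hTsub haT)) ha
      have hScard : (({x, y, z} : Finset (Fin n)) ∪ T).card = r := by
        rw [Finset.card_union_of_disjoint hdisj, hcard3, hTcard]; omega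
      have hSinv := step1 _ hScard
        (Finset.mem_union_left _ (by simp)) (Finset.mem_union_left _ (by simp))
      rw [← hSinv]
      exact Finset.mem_image_of_mem σ (Finset.mem_union_left _ (by simp))
    have h1 := hinv T1 hT1sub hT1card
    have h2 := hinv T2 (fun a ha => (Finset.mem_sdiff.1 (hT2sub ha)).1) hT2card
    rcases Finset.mem_union.1 h1 with h | hT1
    · exact h
    rcases Finset.mem_union.1 h2 with h | hT2
    · exact h
    exact absurd hT1 (Finset.mem_sdiff.1 (hT2sub hT2)).2
  -- Outside a 3-element "bad" set, σ fixes every point.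
  set bad : Finset (Fin n) := {x, y, σ.symm x} with hbad
  have hfixpt : ∀ z : Fin n, z ∉ bad → σ z = z := by
    intro z hz
    simp only [hbad, Finset.mem_insert, Finset.mem_singleton, not_or] at hz
    obtain ⟨hzx, hzy, hzs⟩ := hz
    have h := step2 z hzx hzy
    simp only [Finset.mem_insert, Finset.mem_singleton] at h
    rcases h with h | h | h
    · exfalso
      apply hzs
      rw [← h, Equiv.symm_apply_apply]
    · exfalso
      exact hzx (σ.injective (h.trans hy))
    · exact h
  have hbadcard : bad.card ≤ 3 := by
    calc bad.card ≤ ({y, σ.symm x} : Finset (Fin n)).card + 1 :=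
          Finset.card_insert_le _ _
      _ ≤ (({σ.symm x} : Finset (Fin n)).card + 1) + 1 := by
          exact Nat.add_le_add_right (Finset.card_insert_le _ _) 1
      _ ≤ 3 := by simp
  obtain ⟨W, hWsub, hWcard⟩ :=
    Finset.exists_subset_card_eq (s := badᶜ) (n := r - 1)
      (by rw [Finset.card_compl, hncard]; omega)
  have hxW : x ∉ W := fun h => (Finset.mem_compl.1 (hWsub h)) (by simp [hbad])
  have hyW : y ∉ W := fun h => (Finset.mem_compl.1 (hWsub h)) (by simp [hbad])
  have hWfix : W.image σ = W := by
    apply Finset.ext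
    intro w
    simp only [Finset.mem_image]
    constructor
    · rintro ⟨a, ha, rfl⟩
      rwa [hfixpt a (Finset.mem_compl.1 (hWsub ha) ∘ (fun h => h))]
    · intro hw
      exact ⟨w, hw, hfixpt w (Finset.mem_compl.1 (hWsub hw))⟩
  have hScard : (insert x W).card = r := by
    rw [Finset.card_insert_of_notMem hxW, hWcard]; omega
  have hSimage : (insert x W).image σ = insert y W := by
    rw [Finset.image_insert, hWfix, ← hy]
  obtain ⟨w, hw⟩ : W.Nonempty := by
    rw [← Finset.card_pos, hWcard]; omega
  rcases star (insert x W) hScard with h | h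
  · rw [hSimage] at h
    have : y ∈ insert x W := h ▸ Finset.mem_insert_self y W
    rcases Finset.mem_insert.1 this with h' | h'
    · exact hxy h'.symm
    · exact hyW h'
  · have : w ∈ (insert x W).image σ ∩ insert x W := by
      rw [hSimage]
      exact Finset.mem_inter.2
        ⟨Finset.mem_insert_of_mem hw, Finset.mem_insert_of_mem hw⟩
    rw [h] at this
    exact absurd this (Finset.notMem_empty w)
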